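/- arXiv:2411.05458 — 2 statements merged into one kernel-verified Lean document; each statement's English description precedes it below -/
import Mathlib

section
/- The set of stamp foldings of order n is partitioned into equivalence classes under cyclic rotation, each of size exactly n (for n ≥ 1, every permutation has exactly n distinct cyclic rotations as strings, and being a stamp folding is invariant under rotation). -/
/-- 1-based position of symbol `e` in the string `p`. -/
def posOf (p : List ℕ) (e : ℕ) : ℕ := p.idxOf e + 1

/-- `x` lies strictly between `a` and `b`. -/
def StrictlyBetween (a b x : ℕ) : Prop := min a b < x ∧ x < max a b

/-- Two same-side arcs with endpoint pairs `{a,b}` and `{c,d}` cross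
if exactly one of `c`, `d` lies strictly between `a` and `b`. -/
def ArcsCross (a b c d : ℕ) : Prop :=
  Xor' (StrictlyBetween a b c) (StrictlyBetween a b d)

/-- A stamp folding of order `n`: a permutation of `1,…,n` (as a list, `p i` is
the stamp at position `i`) such that no two bottom arcs (joining the positions
of stamps `i` and `i+1` for odd `i`) cross, and no two top arcs (even `i`) cross. -/
def IsStampFolding (n : ℕ) (p : List ℕ) : Prop :=
  p.Perm (List.range' 1 n) ∧
  ∀ i j : ℕ, 1 ≤ i → i < j → j + 1 ≤ n → i % 2 = j % 2 →
    ¬ ArcsCross (posOf p i) (posOf p (i + 1)) (posOf p j) (posOf p (j + 1))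

/-- A semi-meander of order `n`: a stamp folding in which stamp `n` is visible
from above when `n` is even and from below when `n` is odd, i.e. no arc on the
relevant side strictly covers the position of stamp `n`. -/
def IsSemiMeander (n : ℕ) (p : List ℕ) : Prop :=
  IsStampFolding n p ∧
  ∀ i : ℕ, 1 ≤ i → i + 1 ≤ n → i % 2 = n % 2 →
    ¬ StrictlyBetween (posOf p i) (posOf p (i + 1)) (posOf p n)

/-- How positions change under one rotation step: position 1 goes to `n`,
any other position decreases by one. -/
def rotPos (n x : ℕ) : ℕ := if x = 1 then n else x - 1

lemma arcsCross_rotPos {n a b c d : ℕ}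
    (ha : 1 ≤ a) (ha' : a ≤ n) (hb : 1 ≤ b) (hb' : b ≤ n)
    (hc : 1 ≤ c) (hc' : c ≤ n) (hd : 1 ≤ d) (hd' : d ≤ n)
    (hac : a ≠ c) (had : a ≠ d) (hbc : b ≠ c) (hbd : b ≠ d) (hcd : c ≠ d) :
    ArcsCross (rotPos n a) (rotPos n b) (rotPos n c) (rotPos n d) ↔ ArcsCross a b c d := by
  simp only [ArcsCross, Xor', Xor, StrictlyBetween, rotPos]
  split_ifs <;> omega

lemma posOf_rotate_one {p : List ℕ} (hnd : p.Nodup) {e : ℕ} (he : e ∈ p) :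
    posOf (p.rotate 1) e = rotPos p.length (posOf p e) := by
  cases p with
  | nil => cases he
  | cons a t =>
    have hat : a ∉ t := (List.nodup_cons.mp hnd).1
    simp only [List.rotate_cons_succ, List.rotate_zero, posOf, rotPos]
    rcases eq_or_ne e a with rfl | hea
    · rw [List.idxOf_append_of_notMem hat]
      simp [List.idxOf_cons_self]
    · have het : e ∈ t := by
        rcases List.mem_cons.mp he with h | h
        · exact absurd h hea
        · exact h
      simp only [List.idxOf_append_of_mem het, List.idxOf_cons_ne _ hea.symm]
      simp

lemma isStampFolding_rotate_one {n : ℕ} {p : List ℕ} (h : IsStampFolding n p) :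
    IsStampFolding n (p.rotate 1) := by
  obtain ⟨hperm, hcross⟩ := h
  have hlen : p.length = n := by simpa using hperm.length_eq
  have hnd : p.Nodup := hperm.nodup_iff.mpr (List.nodup_range' _)
  refine ⟨(List.rotate_perm p 1).trans hperm, ?_⟩
  intro i j hi hij hjn hpar
  have hmem : ∀ e : ℕ, 1 ≤ e → e ≤ n → e ∈ p := fun e h1 h2 =>
    hperm.mem_iff.mpr (by rw [List.mem_range'_1]; omega)
  have hij2 : i + 2 ≤ j := by omega
  have mi : i ∈ p := hmem i hi (by omega)
  have mi1 : (i+1) ∈ p := hmem (i+1) (by omega) (by omega)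
  have mj : j ∈ p := hmem j (by omega) (by omega)
  have mj1 : (j+1) ∈ p := hmem (j+1) (by omega) (by omega)
  have hb : ∀ e ∈ p, 1 ≤ posOf p e ∧ posOf p e ≤ n := by
    intro e he
    have := List.idxOf_lt_length_iff.mpr he
    constructor
    · exact Nat.le_add_left 1 _
    · unfold posOf; omega
  have hinj : ∀ e₁ ∈ p, ∀ e₂ ∈ p, e₁ ≠ e₂ → posOf p e₁ ≠ posOf p e₂ := by
    intro e₁ h1 e₂ h2 hne heq
    exact hne ((List.idxOf_inj h1).mp (by unfold posOf at heq; omega))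
  rw [posOf_rotate_one hnd mi, posOf_rotate_one hnd mi1, posOf_rotate_one hnd mj,
    posOf_rotate_one hnd mj1, hlen]
  rw [arcsCross_rotPos (hb i mi).1 (hb i mi).2 (hb _ mi1).1 (hb _ mi1).2
    (hb j mj).1 (hb j mj).2 (hb _ mj1).1 (hb _ mj1).2
    (hinj i mi j mj (by omega)) (hinj i mi _ mj1 (by omega))
    (hinj _ mi1 j mj (by omega)) (hinj _ mi1 _ mj1 (by omega))
    (hinj j mj _ mj1 (by omega))]
  exact hcross i j hi hij hjn hpar

/-- The stamp foldings of order `n ≥ 1` are partitioned into equivalence classes under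
cyclic rotation, each of size exactly `n`: being a stamp folding is invariant under
rotation, and every stamp folding has exactly `n` distinct cyclic rotations. -/
theorem stamp_folding_rotation_classes (n : ℕ) (hn : 1 ≤ n) (p : List ℕ)
    (h : IsStampFolding n p) :
    (∀ k : ℕ, IsStampFolding n (p.rotate k)) ∧
    ((Finset.range n).image (fun k => p.rotate k)).card = n := by
  have hlen : p.length = n := by simpa using h.1.length_eq
  have hnd : p.Nodup := h.1.nodup_iff.mpr (List.nodup_range' _)
  have hne : p ≠ [] := by
    intro hp
    rw [hp] at hlen
    simp at hlen
    omega
  constructor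
  · intro k
    induction k with
    | zero => simpa using h
    | succ m ih =>
      have : p.rotate (m + 1) = (p.rotate m).rotate 1 := by
        rw [List.rotate_rotate, Nat.add_comm]
      rw [this]
      exact isStampFolding_rotate_one ih
  · rw [Finset.card_image_of_injOn, Finset.card_range]
    intro a ha b hb hab
    simp only [Finset.coe_range, Set.mem_Iio] at ha hb
    have := hnd.rotate_congr hne a b hab
    rwa [hlen, Nat.mod_eq_of_lt ha, Nat.mod_eq_of_lt hb] at this
end

section
/- For every semi-meander γ of order n−1 (n ≥ 2), both n·γ and γ·n are semi-meanders of order n. -/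
lemma sb_shift (a b x : ℕ) :
    StrictlyBetween (a + 1) (b + 1) (x + 1) ↔ StrictlyBetween a b x := by
  unfold StrictlyBetween
  omega

lemma sb_not_low {a b x : ℕ} (ha : x ≤ a) (hb : x ≤ b) : ¬ StrictlyBetween a b x := by
  unfold StrictlyBetween; omega

lemma sb_not_high {a b x : ℕ} (ha : a ≤ x) (hb : b ≤ x) : ¬ StrictlyBetween a b x := by
  unfold StrictlyBetween; omega

lemma not_cross {a b c d : ℕ} (hc : ¬ StrictlyBetween a b c) (hd : ¬ StrictlyBetween a b d) :
    ¬ ArcsCross a b c d := by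
  unfold ArcsCross Xor' Xor
  tauto

/-- For every semi-meander `γ` of order `n - 1` (with `n ≥ 2`), both `n · γ` and
`γ · n` are semi-meanders of order `n`. -/
theorem semi_meander_extend (n : ℕ) (hn : 2 ≤ n) (γ : List ℕ)
    (h : IsSemiMeander (n - 1) γ) :
    IsSemiMeander n (n :: γ) ∧ IsSemiMeander n (γ ++ [n]) := by
  obtain ⟨⟨hperm, hcross⟩, hvis⟩ := h
  have hlen : γ.length = n - 1 := by simpa using hperm.length_eq
  have hmem : ∀ e, 1 ≤ e → e + 1 ≤ n → e ∈ γ := by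
    intro e h1 h2
    rw [hperm.mem_iff, List.mem_range']
    exact ⟨e - 1, by omega, by omega⟩
  have hnot : n ∉ γ := by
    rw [hperm.mem_iff, List.mem_range']
    rintro ⟨i, hi, he⟩
    omega
  have hposγ : ∀ e, 1 ≤ e → e + 1 ≤ n → posOf γ e ≤ n - 1 := by
    intro e h1 h2
    have := List.idxOf_lt_length_iff.mpr (hmem e h1 h2)
    unfold posOf
    omega
  have hperm' : γ.Perm (List.range' 1 (n - 1)) := hperm
  -- position facts
  have pc : ∀ e, 1 ≤ e → e + 1 ≤ n → posOf (n :: γ) e = posOf γ e + 1 := by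
    intro e h1 h2
    have he : e ∈ γ := hmem e h1 h2
    have hne : e ≠ n := by intro heq; exact hnot (heq ▸ he)
    simp [posOf, List.idxOf_cons_ne _ (Ne.symm hne)]
  have pcn : posOf (n :: γ) n = 1 := by simp [posOf]
  have pa : ∀ e, 1 ≤ e → e + 1 ≤ n → posOf (γ ++ [n]) e = posOf γ e := by
    intro e h1 h2
    simp [posOf, List.idxOf_append_of_mem (hmem e h1 h2)]
  have pan : posOf (γ ++ [n]) n = n := by
    simp [posOf, List.idxOf_append_of_notMem hnot, hlen]
    omega
  have pos1 : ∀ (p : List ℕ) e, 1 ≤ posOf p e := by intro p e; simp [posOf]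
  have posle : ∀ e, e ∈ (γ ++ [n]) → posOf (γ ++ [n]) e ≤ n := by
    intro e he
    have := List.idxOf_lt_length_iff.mpr he
    have hl : (γ ++ [n]).length = n := by simp [hlen]; omega
    unfold posOf; omega
  have hmem' : ∀ e, 1 ≤ e → e ≤ n → e ∈ γ ++ [n] := by
    intro e h1 h2
    rcases eq_or_lt_of_le h2 with rfl | hlt
    · simp
    · exact List.mem_append_left _ (hmem e h1 (by omega))
  have hpermn : List.range' 1 (n - 1) ++ [n] = List.range' 1 n := by
    have : n = (n - 1) + 1 := by omega
    rw [this, List.range'_concat]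
    congr 1
    simp
    omega
  constructor
  · constructor
    · constructor
      · -- permutation
        rw [← hpermn]
        refine (hperm.cons n).trans ?_
        simpa using (List.perm_middle (a := n) (l₁ := List.range' 1 (n-1)) (l₂ := [])).symm
      · intro i j h1 hij hjn hpar
        rcases eq_or_lt_of_le hjn with heq | hlt
        · -- j = n - 1
          have hj : j = n - 1 := by omega
          subst hj
          rw [pc i h1 (by omega), pc (i+1) (by omega) (by omega),
            pc (n-1) (by omega) (by omega), (by omega : n - 1 + 1 = n), pcn]
          apply not_cross
          · rw [sb_shift]
            exact hvis i h1 (by omega) (by omega)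
          · exact sb_not_low (by omega) (by omega)
        · rw [pc i h1 (by omega), pc (i+1) (by omega) (by omega),
            pc j (by omega) (by omega), pc (j+1) (by omega) (by omega)]
          intro hc
          apply hcross i j h1 hij (by omega) hpar
          unfold ArcsCross Xor' at hc ⊢
          rw [sb_shift, sb_shift] at hc
          exact hc
    · intro i h1 h2 hpar
      rw [pcn]
      exact sb_not_low (pos1 _ _) (pos1 _ _)
  · constructor
    · constructor
      · rw [← hpermn]
        exact hperm.append_right [n]
      · intro i j h1 hij hjn hpar
        rcases eq_or_lt_of_le hjn with heq | hlt
        · have hj : j = n - 1 := by omega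
          subst hj
          rw [pa i h1 (by omega), pa (i+1) (by omega) (by omega),
            pa (n-1) (by omega) (by omega), (by omega : n - 1 + 1 = n), pan]
          apply not_cross
          · exact hvis i h1 (by omega) (by omega)
          · exact sb_not_high (by have := hposγ i h1 (by omega); omega)
              (by have := hposγ (i+1) (by omega) (by omega); omega)
        · rw [pa i h1 (by omega), pa (i+1) (by omega) (by omega),
            pa j (by omega) (by omega), pa (j+1) (by omega) (by omega)]
          exact hcross i j h1 hij (by omega) hpar
    · intro i h1 h2 hpar
      rw [pan]
      exact sb_not_high (posle i (hmem' i h1 (by omega)))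
        (posle (i+1) (hmem' (i+1) (by omega) (by omega)))
end
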